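/- arXiv:1601.02989 — 4 statements merged into one kernel-verified Lean document; each statement's English description precedes it below -/
import Mathlib

section
/- For every natural number n ≥ 1 and complex x with |x| < 1, the hypergeometric function satisfies ₂F₁(3+n, 4; 3; x) = (3 + n x)/(3 (1-x)^{4+n}). -/
/-- The Pochhammer symbol (rising factorial) in `ℂ`. -/
noncomputable def poch (a : ℂ) (k : ℕ) : ℂ := ∏ i ∈ Finset.range k, (a + i)

lemma poch_nat_cast (m k : ℕ) : poch (m : ℂ) k = (m.ascFactorial k : ℂ) := by
  induction k with
  | zero => simp [poch]
  | succ k ih =>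
    rw [poch, Finset.prod_range_succ, ← poch, ih, Nat.ascFactorial_succ]
    push_cast
    ring

lemma poch_fact (m k : ℕ) : poch ((m : ℂ) + 1) k = ((m + k).factorial : ℂ) / (m.factorial : ℂ) := by
  have h1 : ((m : ℂ) + 1) = (((m + 1 : ℕ) : ℂ)) := by push_cast; ring
  rw [h1, poch_nat_cast, eq_div_iff (by exact_mod_cast m.factorial_pos.ne')]
  norm_cast
  rw [mul_comm]
  exact Nat.factorial_mul_ascFactorial m k

lemma alg (F A K B xk ν κ : ℂ) (hA : A ≠ 0) (hK : K ≠ 0) (hB : B ≠ 0) (hν : ν + 3 ≠ 0) :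
    F / A * ((κ + 3) * B / 6) / (K * (B / 2)) * xk
      = (ν + 3) / 3 * ((κ + ν + 3) * F / ((ν + 3) * A * K) * xk)
        - ν / 3 * (F / (A * K) * xk) := by
  have cancel : (ν + 3) / 3 * ((κ + ν + 3) * F / ((ν + 3) * A * K) * xk)
      = (κ + ν + 3) * F / (3 * A * K) * xk := by
    field_simp
  rw [cancel]
  field_simp
  ring

theorem hyp2F1_special (n : ℕ) (hn : 1 ≤ n) (x : ℂ) (hx : ‖x‖ < 1) :
    HasSum (fun k : ℕ =>
        poch (3 + n) k * poch 4 k / ((k.factorial : ℂ) * poch 3 k) * x ^ k)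
      ((3 + (n : ℂ) * x) / (3 * (1 - x) ^ (4 + n))) := by
  have hx' : ‖x‖ < 1 := hx
  have h1 := hasSum_choose_mul_geometric_of_norm_lt_one (n + 3) hx'
  have h2 := hasSum_choose_mul_geometric_of_norm_lt_one (n + 2) hx'
  have hone : (1 - x) ≠ 0 := by
    intro h
    rw [sub_eq_zero] at h
    rw [← h] at hx
    simp at hx
  have key := (h1.mul_left (((n : ℂ) + 3) / 3)).sub (h2.mul_left ((n : ℂ) / 3))
  convert key using 1
  · rfl
  · funext k
    set F : ℂ := ((k + (n + 2)).factorial : ℂ) with hF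
    set A : ℂ := ((n + 2).factorial : ℂ) with hA'
    set K : ℂ := (k.factorial : ℂ) with hK'
    set B : ℂ := ((2 + k).factorial : ℂ) with hB'
    have hA : A ≠ 0 := by rw [hA']; exact_mod_cast (n + 2).factorial_pos.ne'
    have hK : K ≠ 0 := by rw [hK']; exact_mod_cast k.factorial_pos.ne'
    have hB : B ≠ 0 := by rw [hB']; exact_mod_cast (2 + k).factorial_pos.ne'
    have hν : ((n : ℂ)) + 3 ≠ 0 := by
      have : ((n + 3 : ℕ) : ℂ) ≠ 0 := Nat.cast_ne_zero.mpr (by omega)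
      push_cast at this; exact this
    have e1 : poch (3 + (n : ℂ)) k = F / A := by
      have h : (3 + (n : ℂ)) = ((n + 2 : ℕ) : ℂ) + 1 := by push_cast; ring
      rw [h, poch_fact, hF, hA', add_comm (n + 2) k]
    have e2 : poch (4 : ℂ) k = ((k : ℂ) + 3) * B / 6 := by
      have h : (4 : ℂ) = ((3 : ℕ) : ℂ) + 1 := by norm_num
      rw [h, poch_fact, hB']
      have h3 : (3 : ℕ) + k = (2 + k) + 1 := by omega
      rw [h3, Nat.factorial_succ]
      have h6 : (((3 : ℕ).factorial : ℕ) : ℂ) = 6 := by norm_num [Nat.factorial]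
      rw [h6]
      push_cast
      ring
    have e3 : poch (3 : ℂ) k = B / 2 := by
      have h : (3 : ℂ) = ((2 : ℕ) : ℂ) + 1 := by norm_num
      rw [h, poch_fact, hB']
      have h2' : (((2 : ℕ).factorial : ℕ) : ℂ) = 2 := by norm_num [Nat.factorial]
      rw [h2']
    have c1 : (((k + (n + 3)).choose (n + 3) : ℕ) : ℂ)
        = ((k : ℂ) + (n : ℂ) + 3) * F / (((n : ℂ) + 3) * A * K) := by
      rw [Nat.cast_choose ℂ (Nat.le_add_left _ _), Nat.add_sub_cancel]
      have f1 : ((k + (n + 3)).factorial : ℂ) = ((k + n + 3 : ℕ) : ℂ) * F := by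
        have h : k + (n + 3) = (k + (n + 2)) + 1 := by omega
        rw [h, Nat.factorial_succ, hF]
        push_cast
        ring
      have f2 : (((n + 3).factorial : ℕ) : ℂ) = ((n + 3 : ℕ) : ℂ) * A := by
        rw [Nat.factorial_succ, hA']
        push_cast
        ring
      rw [f1, f2, hK']
      push_cast
      ring
    have c2 : (((k + (n + 2)).choose (n + 2) : ℕ) : ℂ) = F / (A * K) := by
      rw [Nat.cast_choose ℂ (Nat.le_add_left _ _), Nat.add_sub_cancel, hF, hA', hK']
    rw [e1, e2, e3, c1, c2]
    exact alg F A K B (x ^ k) n k hA hK hB hν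
  · have hpow : (1 - x) ^ (4 + n) = (1 - x) ^ (n + 3) * (1 - x) := by
      rw [← pow_succ]
      congr 1
      omega
    have hp3 : (1 - x) ^ (n + 3) ≠ 0 := pow_ne_zero _ hone
    rw [show n + 3 + 1 = 4 + n by omega, show n + 2 + 1 = n + 3 by omega, hpow]
    field_simp
    ring
end

section
/- For complex parameters a, b, b', c (with c and c+1 not nonpositive integers) and x, y in the open unit disk, the Appell series satisfies the contiguous relation c·F₁(a; b, b'; c; x, y) − (c−a)·F₁(a; b, b'; c+1; x, y) − a·F₁(a+1; b, b'; c+1; x, y) = 0. -/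
/-- The Appell hypergeometric series `F₁(a; b, b'; c; x, y)`. -/
noncomputable def appellF1 (a b b' c x y : ℂ) : ℂ :=
  ∑' p : ℕ × ℕ,
    poch a (p.1 + p.2) * poch b p.1 * poch b' p.2 /
      ((p.1.factorial : ℂ) * (p.2.factorial : ℂ) * poch c (p.1 + p.2)) *
      x ^ p.1 * y ^ p.2

/-- Compatibility: the complex absolute value as an `AbsoluteValue`. -/
noncomputable def Complex.abs : AbsoluteValue ℂ ℝ where
  toFun := fun z => ‖z‖
  map_mul' := norm_mul
  nonneg' := norm_nonneg
  eq_zero' := fun _ => norm_eq_zero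
  add_le' := norm_add_le

lemma Complex.norm_eq_abs (z : ℂ) : ‖z‖ = Complex.abs z := rfl

@[simp]
lemma Complex.abs_natCast (n : ℕ) : Complex.abs (n : ℂ) = n := Complex.norm_natCast n

lemma poch_ne_zero {c : ℂ} (hc : ∀ m : ℕ, c ≠ -(m : ℂ)) (k : ℕ) : poch c k ≠ 0 := by
  refine Finset.prod_ne_zero_iff.mpr fun i _ hi => hc i ?_
  exact eq_neg_of_add_eq_zero_left hi

lemma poch_mul_eq (c : ℂ) (k : ℕ) : c * poch (c + 1) k = poch c k * (c + k) := by
  have h1 : poch c (k + 1) = c * poch (c + 1) k := by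
    rw [poch, Finset.prod_range_succ']
    simp only [Nat.cast_zero, add_zero, mul_comm]
    congr 1
    · rw [poch]
      refine Finset.prod_congr rfl fun i _ => ?_
      push_cast; ring
  have h2 : poch c (k + 1) = poch c k * (c + k) := by
    rw [poch, Finset.prod_range_succ, poch]
  rw [← h1, h2]

lemma prod_bound (t : ℕ) (k : ℕ) :
    ∏ i ∈ Finset.range k, (1 + (t : ℝ) / (i + 1)) ≤ (k + 1) ^ t := by
  induction k with
  | zero => simp
  | succ k ih =>
    rw [Finset.prod_range_succ]
    push_cast
    have h1 : (0 : ℝ) < (k : ℝ) + 1 := by positivity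
    have hb : (1 : ℝ) + t * (1 / ((k : ℝ) + 1)) ≤ (1 + 1 / ((k : ℝ) + 1)) ^ t := by
      refine one_add_mul_le_pow ?_ t
      have : (0:ℝ) ≤ 1 / ((k:ℝ)+1) := by positivity
      linarith
    have hnn : (0:ℝ) ≤ 1 + (t : ℝ) / ((k:ℝ) + 1) := by positivity
    calc (∏ i ∈ Finset.range k, (1 + (t : ℝ) / (i + 1))) * (1 + (t : ℝ) / ((k:ℝ) + 1))
        ≤ ((k:ℝ) + 1) ^ t * (1 + 1 / ((k:ℝ) + 1)) ^ t := by
          apply mul_le_mul ih _ hnn (by positivity)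
          calc (1:ℝ) + (t:ℝ) / ((k:ℝ)+1) = 1 + t * (1 / ((k:ℝ)+1)) := by ring
          _ ≤ _ := hb
      _ = (((k:ℝ) + 1) * (1 + 1 / ((k:ℝ) + 1))) ^ t := by rw [mul_pow]
      _ = ((k:ℝ) + 1 + 1) ^ t := by congr 1; field_simp

lemma abs_poch_le (b : ℂ) (m : ℕ) :
    Complex.abs (poch b m) ≤ (m.factorial : ℝ) * (m + 1) ^ (⌈Complex.abs b⌉₊) := by
  set t := ⌈Complex.abs b⌉₊ with ht
  have hbt : Complex.abs b ≤ t := Nat.le_ceil _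
  have h1 : Complex.abs (poch b m) ≤ ∏ i ∈ Finset.range m, (((i:ℝ) + 1) * (1 + (t:ℝ) / (i + 1))) := by
    rw [poch, map_prod]
    refine Finset.prod_le_prod (fun i _ => AbsoluteValue.nonneg _ _) fun i _ => ?_
    have h2 : Complex.abs (b + i) ≤ Complex.abs b + i := by
      simpa using Complex.abs.add_le b i
    have h3 : (0:ℝ) < (i:ℝ) + 1 := by positivity
    have h5 : ((i:ℝ) + 1) * (1 + (t:ℝ) / (i + 1)) = (i:ℝ) + 1 + t := by field_simp
    rw [h5]
    linarith
  rw [Finset.prod_mul_distrib] at h1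
  have h4 : ∏ i ∈ Finset.range m, ((i:ℝ) + 1) = (m.factorial : ℝ) := by
    exact_mod_cast Finset.prod_range_add_one_eq_factorial m
  calc Complex.abs (poch b m) ≤ _ := h1
    _ ≤ (m.factorial : ℝ) * ((m:ℝ) + 1) ^ t := by
        rw [h4]
        exact mul_le_mul_of_nonneg_left (prod_bound t m) (by positivity)

lemma abs_poch_ratio (a c : ℂ) (hc : ∀ m : ℕ, c ≠ -(m : ℂ)) :
    ∃ t : ℕ, ∀ k : ℕ, Complex.abs (poch a k) ≤ ((k:ℝ) + 1) ^ t * Complex.abs (poch c k) := by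
  have habs : ∀ i : ℕ, 0 < Complex.abs (c + i) := by
    intro i
    rw [AbsoluteValue.pos_iff]
    intro h
    exact hc i (eq_neg_of_add_eq_zero_left h)
  obtain ⟨K, hK2, hK⟩ : ∃ K : ℝ, 2 ≤ K ∧ ∀ i : ℕ, (i:ℝ) + 1 ≤ K * Complex.abs (c + i) := by
    set N := ⌈2 * (Complex.abs c + 1)⌉₊ with hN
    set S := ∑ i ∈ Finset.range N, ((i:ℝ) + 1) / Complex.abs (c + i) with hS
    have hS0 : 0 ≤ S := Finset.sum_nonneg fun j _ => div_nonneg (by positivity) (AbsoluteValue.nonneg _ _)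
    refine ⟨2 + S, by linarith, fun i => ?_⟩
    by_cases hi : i < N
    · have h5 : ((i:ℝ) + 1) / Complex.abs (c + i) ≤ S :=
        Finset.single_le_sum (f := fun j : ℕ => ((j:ℝ) + 1) / Complex.abs (c + (j:ℂ)))
          (fun j _ => div_nonneg (by positivity) (AbsoluteValue.nonneg _ _)) (Finset.mem_range.mpr hi)
      have h6 := habs i
      rw [div_le_iff₀ h6] at h5
      nlinarith [h5, h6]
    · push_neg at hi
      have h7 : 2 * (Complex.abs c + 1) ≤ (i:ℝ) := le_trans (Nat.le_ceil _) (by exact_mod_cast hi)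
      have h8 : (i:ℝ) ≤ Complex.abs (c + i) + Complex.abs c := by
        calc (i:ℝ) = Complex.abs ((i:ℂ)) := by rw [Complex.abs_natCast]
          _ = Complex.abs ((c + i) + (-c)) := by congr 1; ring
          _ ≤ Complex.abs (c + i) + Complex.abs (-c) := Complex.abs.add_le _ _
          _ = Complex.abs (c + i) + Complex.abs c := by rw [Complex.abs.map_neg]
      have h6 := habs i
      nlinarith [Complex.abs.nonneg c]
  set t := ⌈Complex.abs (a - c) * K⌉₊ with htdef
  have hMt : Complex.abs (a - c) * K ≤ t := Nat.le_ceil _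
  refine ⟨t, fun k => ?_⟩
  have h1 : Complex.abs (poch a k) ≤ ∏ i ∈ Finset.range k, (Complex.abs (c + i) * (1 + (t:ℝ)/(i + 1))) := by
    rw [poch, map_prod]
    refine Finset.prod_le_prod (fun i _ => AbsoluteValue.nonneg _ _) fun i _ => ?_
    have h2 : Complex.abs (a + i) ≤ Complex.abs (c + i) + Complex.abs (a - c) := by
      rw [show (a + (i:ℂ)) = (c + i) + (a - c) by ring]
      exact Complex.abs.add_le _ _
    have h3 : (0:ℝ) < (i:ℝ) + 1 := by positivity
    have h4 : Complex.abs (a - c) * ((i:ℝ) + 1) ≤ (t:ℝ) * Complex.abs (c + i) := by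
      calc Complex.abs (a - c) * ((i:ℝ) + 1) ≤ Complex.abs (a - c) * (K * Complex.abs (c + i)) :=
            mul_le_mul_of_nonneg_left (hK i) (AbsoluteValue.nonneg _ _)
        _ = Complex.abs (a - c) * K * Complex.abs (c + i) := by ring
        _ ≤ (t:ℝ) * Complex.abs (c + i) := mul_le_mul_of_nonneg_right hMt (AbsoluteValue.nonneg _ _)
    have h5 : Complex.abs (c + i) * (1 + (t:ℝ)/(i + 1)) = Complex.abs (c + i) + (t:ℝ) * Complex.abs (c + i) / ((i:ℝ)+1) := by
      field_simp
    rw [h5]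
    have h6 : Complex.abs (a - c) ≤ (t:ℝ) * Complex.abs (c + i) / ((i:ℝ)+1) := by
      rw [le_div_iff₀ h3]
      linarith
    linarith
  rw [Finset.prod_mul_distrib] at h1
  calc Complex.abs (poch a k) ≤ _ := h1
    _ ≤ Complex.abs (poch c k) * (((k:ℝ)+1) ^ t) := by
        rw [poch, map_prod]
        exact mul_le_mul_of_nonneg_left (prod_bound t k) (Finset.prod_nonneg fun i _ => AbsoluteValue.nonneg _ _)
    _ = _ := mul_comm _ _

lemma summable_aux (p : ℕ) {r : ℝ} (h0 : 0 ≤ r) (h1 : r < 1) :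
    Summable (fun n : ℕ => ((n:ℝ) + 1) ^ p * r ^ n) := by
  have hg : Summable (fun n : ℕ => (2:ℝ) ^ p * r ^ n + 2 ^ p * ((n:ℝ) ^ p * r ^ n)) := by
    refine Summable.add (Summable.mul_left _ ?_) (Summable.mul_left _ ?_)
    · exact summable_geometric_of_lt_one h0 h1
    · exact summable_pow_mul_geometric_of_norm_lt_one p (by rwa [Real.norm_eq_abs, abs_of_nonneg h0])
  refine Summable.of_nonneg_of_le (fun n => by positivity) (fun n => ?_) hg
  have hrn : (0:ℝ) ≤ r ^ n := by positivity
  rcases Nat.eq_zero_or_pos n with hn | hn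
  · subst hn
    simp only [Nat.cast_zero, zero_add, one_pow, pow_zero, mul_one]
    have h2 : (1:ℝ) ≤ 2 ^ p := one_le_pow₀ (by norm_num)
    have h3 : (0:ℝ) ≤ 2 ^ p * ((0:ℝ) ^ p * 1) := by positivity
    nlinarith
  · have h2 : ((n:ℝ) + 1) ^ p ≤ 2 ^ p * (n:ℝ) ^ p := by
      rw [← mul_pow]
      refine pow_le_pow_left₀ (by positivity) ?_ p
      have : (1:ℝ) ≤ (n:ℝ) := by exact_mod_cast hn
      linarith
    have h3 : (0:ℝ) ≤ 2 ^ p * r ^ n := by positivity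
    nlinarith [mul_le_mul_of_nonneg_right h2 hrn]

set_option maxHeartbeats 1000000 in
lemma summable_appellF1 (a b b' c x y : ℂ) (hc : ∀ m : ℕ, c ≠ -(m : ℂ))
    (hx : Complex.abs x < 1) (hy : Complex.abs y < 1) :
    Summable (fun p : ℕ × ℕ =>
      poch a (p.1 + p.2) * poch b p.1 * poch b' p.2 /
        ((p.1.factorial : ℂ) * (p.2.factorial : ℂ) * poch c (p.1 + p.2)) *
        x ^ p.1 * y ^ p.2) := by
  obtain ⟨t, ht⟩ := abs_poch_ratio a c hc
  set tb := ⌈Complex.abs b⌉₊ with htb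
  set tb' := ⌈Complex.abs b'⌉₊ with htb'
  apply Summable.of_norm
  have hs : Summable (fun p : ℕ × ℕ =>
      (((p.1:ℝ) + 1) ^ (t + tb) * Complex.abs x ^ p.1) *
      (((p.2:ℝ) + 1) ^ (t + tb') * Complex.abs y ^ p.2)) :=
    Summable.mul_of_nonneg (summable_aux _ (AbsoluteValue.nonneg _ _) hx)
      (summable_aux _ (AbsoluteValue.nonneg _ _) hy)
      (fun n => by positivity) (fun n => by positivity)
  refine Summable.of_nonneg_of_le (fun p => norm_nonneg _) (fun p => ?_) hs
  obtain ⟨m, n⟩ := p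
  simp only [Complex.norm_eq_abs, map_mul, map_div₀, map_pow]
  set k := m + n with hk
  set Pa := Complex.abs (poch a k) with hPa
  set Pb := Complex.abs (poch b m) with hPb
  set Pb' := Complex.abs (poch b' n) with hPb'
  set Pc := Complex.abs (poch c k) with hPc
  have hPcpos : 0 < Pc := AbsoluteValue.pos _ (poch_ne_zero hc k)
  have hfm : Complex.abs ((m.factorial : ℂ)) = (m.factorial : ℝ) := by
    rw [Complex.abs_natCast]
  have hfn : Complex.abs ((n.factorial : ℂ)) = (n.factorial : ℝ) := by
    rw [Complex.abs_natCast]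
  rw [hfm, hfn]
  have hfmpos : (0:ℝ) < m.factorial := by exact_mod_cast m.factorial_pos
  have hfnpos : (0:ℝ) < n.factorial := by exact_mod_cast n.factorial_pos
  have hnum : Pa * Pb * Pb' ≤
      ((m:ℝ)+1) ^ t * ((n:ℝ)+1) ^ t * Pc * ((m.factorial : ℝ) * ((m:ℝ)+1) ^ tb) *
      ((n.factorial : ℝ) * ((n:ℝ)+1) ^ tb') := by
    have h1 : Pa ≤ ((m:ℝ)+1) ^ t * ((n:ℝ)+1) ^ t * Pc := by
      refine le_trans (ht k) ?_
      have h2 : ((k:ℝ) + 1) ≤ ((m:ℝ)+1) * ((n:ℝ)+1) := by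
        push_cast [hk]; nlinarith [Nat.cast_nonneg (α := ℝ) m, Nat.cast_nonneg (α := ℝ) n]
      rw [← mul_pow]
      exact mul_le_mul_of_nonneg_right (pow_le_pow_left₀ (by positivity) h2 t) hPcpos.le
    calc Pa * Pb * Pb' ≤ (((m:ℝ)+1) ^ t * ((n:ℝ)+1) ^ t * Pc) * ((m.factorial : ℝ) * ((m:ℝ)+1) ^ tb) * ((n.factorial : ℝ) * ((n:ℝ)+1) ^ tb') := by
          refine mul_le_mul (mul_le_mul h1 (abs_poch_le b m) (AbsoluteValue.nonneg _ _) (by positivity)) (abs_poch_le b' n) (AbsoluteValue.nonneg _ _) (by positivity)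
      _ = _ := rfl
  have key : ((m:ℝ)+1) ^ t * ((n:ℝ)+1) ^ t * Pc * ((m.factorial : ℝ) * ((m:ℝ)+1) ^ tb) *
      ((n.factorial : ℝ) * ((n:ℝ)+1) ^ tb') / ((m.factorial : ℝ) * (n.factorial : ℝ) * Pc)
      = ((m:ℝ)+1) ^ (t + tb) * ((n:ℝ)+1) ^ (t + tb') := by
    field_simp
    ring
  calc Pa * Pb * Pb' / ((m.factorial : ℝ) * (n.factorial : ℝ) * Pc) * Complex.abs x ^ m * Complex.abs y ^ n
      ≤ ((m:ℝ)+1) ^ t * ((n:ℝ)+1) ^ t * Pc * ((m.factorial : ℝ) * ((m:ℝ)+1) ^ tb) *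
        ((n.factorial : ℝ) * ((n:ℝ)+1) ^ tb') / ((m.factorial : ℝ) * (n.factorial : ℝ) * Pc) *
        Complex.abs x ^ m * Complex.abs y ^ n := by
        gcongr
    _ = ((m:ℝ)+1) ^ (t + tb) * ((n:ℝ)+1) ^ (t + tb') * Complex.abs x ^ m * Complex.abs y ^ n := by
        rw [key]
    _ = (((m:ℝ) + 1) ^ (t + tb) * Complex.abs x ^ m) * (((n:ℝ) + 1) ^ (t + tb') * Complex.abs y ^ n) := by
        ring

theorem appellF1_contiguous (a b b' c : ℂ)
    (hc : ∀ m : ℕ, c ≠ -(m : ℂ)) (hc1 : ∀ m : ℕ, c + 1 ≠ -(m : ℂ))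
    (x y : ℂ) (hx : ‖x‖ < 1) (hy : ‖y‖ < 1) :
    c * appellF1 a b b' c x y - (c - a) * appellF1 a b b' (c + 1) x y -
      a * appellF1 (a + 1) b b' (c + 1) x y = 0 := by
  have hg := summable_appellF1 a b b' (c + 1) x y hc1 hx hy
  have hh := summable_appellF1 (a + 1) b b' (c + 1) x y hc1 hx hy
  have key : ∀ p : ℕ × ℕ,
      c * (poch a (p.1 + p.2) * poch b p.1 * poch b' p.2 /
        ((p.1.factorial : ℂ) * (p.2.factorial : ℂ) * poch c (p.1 + p.2)) * x ^ p.1 * y ^ p.2)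
      = (c - a) * (poch a (p.1 + p.2) * poch b p.1 * poch b' p.2 /
        ((p.1.factorial : ℂ) * (p.2.factorial : ℂ) * poch (c + 1) (p.1 + p.2)) * x ^ p.1 * y ^ p.2)
      + a * (poch (a + 1) (p.1 + p.2) * poch b p.1 * poch b' p.2 /
        ((p.1.factorial : ℂ) * (p.2.factorial : ℂ) * poch (c + 1) (p.1 + p.2)) * x ^ p.1 * y ^ p.2) := by
    rintro ⟨m, n⟩
    have hPc := poch_ne_zero hc (m + n)
    have hPc1 := poch_ne_zero hc1 (m + n)
    have hfm : ((m.factorial : ℂ)) ≠ 0 := Nat.cast_ne_zero.mpr m.factorial_ne_zero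
    have hfn : ((n.factorial : ℂ)) ≠ 0 := Nat.cast_ne_zero.mpr n.factorial_ne_zero
    have h1 := poch_mul_eq c (m + n)
    have h2 := poch_mul_eq a (m + n)
    have core : c * (poch c (m + n))⁻¹ = (c + ((m + n : ℕ) : ℂ)) * (poch (c + 1) (m + n))⁻¹ := by
      rw [mul_inv_eq_iff_eq_mul₀ hPc]
      field_simp
      push_cast at h1 ⊢
      linear_combination h1
    linear_combination (poch a (m + n) * poch b m * poch b' n *
        ((m.factorial : ℂ) * (n.factorial : ℂ))⁻¹ * x ^ m * y ^ n) * core -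
      (poch b m * poch b' n * ((m.factorial : ℂ) * (n.factorial : ℂ))⁻¹ *
        (poch (c + 1) (m + n))⁻¹ * x ^ m * y ^ n) * h2
  rw [appellF1, appellF1, appellF1, ← tsum_mul_left, ← tsum_mul_left, ← tsum_mul_left,
    sub_sub, ← Summable.tsum_add (hg.mul_left _) (hh.mul_left _), sub_eq_zero]
  exact tsum_congr key
end

section
/- For positive real r and complex ν_1, …, ν_n in the open unit disk, the sum over all β = (β_1, …, β_n) ∈ ℕⁿ of (2/r)(β_1 + ⋯ + β_n + n + r/2) ∏_{j=1}^n (β_j + 1) ν_1^{β_1} ⋯ ν_n^{β_n} converges and equals ∏_{k=1}^n (1−ν_k)^{-2} + ∑_{k=1}^n 2(1+ν_k)/(r (1−ν_1)² ⋯ (1−ν_n)² (1−ν_k)). -/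
open Finset

lemma aux_hasSum_add_one_mul {x : ℂ} (hx : ‖x‖ < 1) :
    HasSum (fun m : ℕ => ((m : ℂ) + 1) * x ^ m) (((1 - x) ^ 2)⁻¹) := by
  have h := hasSum_choose_mul_geometric_of_norm_lt_one 1 hx (𝕜 := ℂ)
  simpa [Nat.choose_one_right, one_div] using h

lemma aux_hasSum_sq_mul {x : ℂ} (hx : ‖x‖ < 1) :
    HasSum (fun m : ℕ => ((m : ℂ) + 1) ^ 2 * x ^ m)
      (2 * ((1 - x) ^ 3)⁻¹ - ((1 - x) ^ 2)⁻¹) := by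
  have h2 := (hasSum_choose_mul_geometric_of_norm_lt_one 2 hx (𝕜 := ℂ)).mul_left 2
  have h1 := aux_hasSum_add_one_mul hx
  convert h2.sub h1 using 1
  · rfl
  · funext m
    have hn : (m + 2).choose 2 * 2 = (m + 1) * (m + 2) := by
      rw [Nat.choose_two_right, Nat.succ_sub_one,
        Nat.div_mul_cancel (by simpa [mul_comm] using (Nat.even_mul_succ_self (m + 1)).two_dvd),
        mul_comm]
    have hc : ((m + 2).choose 2 : ℂ) * 2 = ((m : ℂ) + 1) * ((m : ℂ) + 2) := by
      exact_mod_cast congrArg (Nat.cast : ℕ → ℂ) hn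
    linear_combination (-(x ^ m)) * hc
  · norm_num

lemma aux_summable_norm_add_one {x : ℂ} (hx : ‖x‖ < 1) :
    Summable fun m : ℕ => ‖((m : ℂ) + 1) * x ^ m‖ := by
  have h := summable_norm_mul_geometric_of_norm_lt_one (k := 1) (r := x) hx
    (u := fun n => n + 1) ?_
  · convert h using 2 with m; push_cast; ring_nf
  · apply Asymptotics.isBigO_iff.2 ⟨2, ?_⟩
    filter_upwards [Filter.eventually_ge_atTop 1] with m hm
    simp only [Real.norm_eq_abs]
    push_cast
    rw [abs_of_nonneg (by positivity), abs_of_nonneg (by positivity)]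
    have : (1:ℝ) ≤ m := by exact_mod_cast hm
    nlinarith

lemma aux_summable_norm_sq {x : ℂ} (hx : ‖x‖ < 1) :
    Summable fun m : ℕ => ‖((m : ℂ) + 1) ^ 2 * x ^ m‖ := by
  have h := summable_norm_mul_geometric_of_norm_lt_one (k := 2) (r := x) hx
    (u := fun n => (n + 1) ^ 2) ?_
  · convert h using 2 with m; push_cast; ring_nf
  · apply Asymptotics.isBigO_iff.2 ⟨4, ?_⟩
    filter_upwards [Filter.eventually_ge_atTop 1] with m hm
    simp only [Real.norm_eq_abs]
    push_cast
    rw [abs_of_nonneg (by positivity), abs_of_nonneg (by positivity)]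
    have : (1:ℝ) ≤ m := by exact_mod_cast hm
    nlinarith

set_option maxHeartbeats 1000000 in
lemma aux_pi_hasSum : ∀ (n : ℕ) (f : Fin n → ℕ → ℂ) (a : Fin n → ℂ),
    (∀ i, HasSum (f i) (a i)) → (∀ i, Summable fun m => ‖f i m‖) →
    HasSum (fun β : Fin n → ℕ => ∏ i, f i (β i)) (∏ i, a i) ∧
      Summable (fun β : Fin n → ℕ => ‖∏ i, f i (β i)‖) := by
  intro n
  induction n with
  | zero =>
    intro f a _ _
    constructor
    · simpa using hasSum_single (f := fun β : Fin 0 → ℕ => ∏ i, f i (β i))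
        (fun _ => 0) (fun b hb => absurd (Subsingleton.elim b _) hb)
    · exact Summable.of_finite
  | succ n ih =>
    intro f a h hn
    obtain ⟨ih1, ih2⟩ := ih (fun i => f (Fin.succ i)) (fun i => a (Fin.succ i))
      (fun i => h (Fin.succ i)) (fun i => hn (Fin.succ i))
    have ih1' : HasSum (fun β : Fin n → ℕ => ∏ i, f (Fin.succ i) (β i))
        (∏ i, a (Fin.succ i)) := ih1
    have ih2' : Summable (fun β : Fin n → ℕ => ‖∏ i, f (Fin.succ i) (β i)‖) := ih2
    have S := summable_mul_of_summable_norm (hn 0) ih2'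
    have hmul := HasSum.mul (f := f 0)
      (g := fun β : Fin n → ℕ => ∏ i, f (Fin.succ i) (β i)) (h 0) ih1' S
    have hnorm : Summable (fun p : ℕ × (Fin n → ℕ) => ‖f 0 p.1 * ∏ i, f (Fin.succ i) (p.2 i)‖) :=
      Summable.mul_norm (f := f 0)
        (g := fun β : Fin n → ℕ => ∏ i, f (Fin.succ i) (β i)) (hn 0) ih2'
    let e : (ℕ × (Fin n → ℕ)) ≃ (Fin (n + 1) → ℕ) := Fin.consEquiv (fun _ => ℕ)
    have hfe : ((fun β : Fin (n + 1) → ℕ => ∏ i, f i (β i)) ∘ e)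
        = fun p : ℕ × (Fin n → ℕ) => f 0 p.1 * ∏ i, f (Fin.succ i) (p.2 i) := by
      funext p
      simp only [Function.comp_apply, e, Fin.consEquiv_apply]
      rw [Fin.prod_univ_succ]
      simp [Fin.cons_zero, Fin.cons_succ]
    constructor
    · have := e.hasSum_iff.mp (by rw [hfe]; exact hmul)
      rwa [Fin.prod_univ_succ]
    · apply e.summable_iff.mp
      have : ((fun β : Fin (n + 1) → ℕ => ‖∏ i, f i (β i)‖) ∘ e)
          = fun p : ℕ × (Fin n → ℕ) => ‖f 0 p.1 * ∏ i, f (Fin.succ i) (p.2 i)‖ := by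
        funext p
        simp only [Function.comp_apply]
        rw [← congrFun hfe p]
        rfl
      rw [this]
      exact hnorm

theorem hasSum_omega_kernel (n : ℕ) (r : ℝ) (hr : r > 0)
    (ν : Fin n → ℂ) (hν : ∀ k, ‖ν k‖ < 1) :
    HasSum (fun β : Fin n → ℕ =>
        (2 / (r : ℂ)) * ((∑ j, (β j : ℂ)) + n + (r : ℂ) / 2) *
          ∏ j, (((β j : ℂ) + 1) * ν j ^ β j))
      ((∏ k, ((1 - ν k) ^ 2)⁻¹) +
        ∑ k, 2 * (1 + ν k) / ((r : ℂ) * (∏ j, (1 - ν j) ^ 2) * (1 - ν k))) := by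
  classical
  have hx : ∀ k, ‖ν k‖ < 1 := fun k => by simpa using hν k
  have hν1 : ∀ k, (1 : ℂ) - ν k ≠ 0 := by
    intro k
    refine sub_ne_zero_of_ne fun hcontra => ?_
    have := hx k
    rw [← hcontra] at this
    simpa using this
  have hrC : (r : ℂ) ≠ 0 := Complex.ofReal_ne_zero.2 (ne_of_gt hr)
  have hQ : (∏ j, (1 - ν j) ^ 2) ≠ 0 :=
    Finset.prod_ne_zero_iff.2 fun j _ => pow_ne_zero 2 (hν1 j)
  set Q : ℂ := ∏ j, (1 - ν j) ^ 2 with hQdef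
  -- base family
  have hbase := (aux_pi_hasSum n (fun j m => ((m : ℂ) + 1) * ν j ^ m)
      (fun j => ((1 - ν j) ^ 2)⁻¹)
      (fun j => aux_hasSum_add_one_mul (hx j))
      (fun j => aux_summable_norm_add_one (hx j))).1
  -- per-k families
  have hK : ∀ k : Fin n,
      HasSum (fun β : Fin n → ℕ =>
          ∏ j, ((if j = k then ((β j : ℂ) + 1) ^ 2 else ((β j : ℂ) + 1)) * ν j ^ β j))
        (∏ j, if j = k then 2 * ((1 - ν j) ^ 3)⁻¹ - ((1 - ν j) ^ 2)⁻¹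
          else ((1 - ν j) ^ 2)⁻¹) := by
    intro k
    refine (aux_pi_hasSum n
      (fun j m => (if j = k then ((m : ℂ) + 1) ^ 2 else ((m : ℂ) + 1)) * ν j ^ m)
      (fun j => if j = k then 2 * ((1 - ν j) ^ 3)⁻¹ - ((1 - ν j) ^ 2)⁻¹
        else ((1 - ν j) ^ 2)⁻¹) (fun j => ?_) (fun j => ?_)).1
    · by_cases hj : j = k
      · simpa [hj] using aux_hasSum_sq_mul (hx j)
      · simpa [hj] using aux_hasSum_add_one_mul (hx j)
    · by_cases hj : j = k
      · simpa [hj] using aux_summable_norm_sq (hx j)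
      · simpa [hj] using aux_summable_norm_add_one (hx j)
  have htot := hbase.add (hasSum_sum (s := Finset.univ)
    (f := fun k (β : Fin n → ℕ) => (2 / (r : ℂ)) *
      ∏ j, ((if j = k then ((β j : ℂ) + 1) ^ 2 else ((β j : ℂ) + 1)) * ν j ^ β j))
    (fun k _ => (hK k).mul_left (2 / (r : ℂ))))
  convert htot using 1
  · funext β
    have hprod : ∀ k : Fin n,
        ∏ j, ((if j = k then ((β j : ℂ) + 1) ^ 2 else ((β j : ℂ) + 1)) * ν j ^ β j)
          = ((β k : ℂ) + 1) * ∏ j, (((β j : ℂ) + 1) * ν j ^ β j) := by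
      intro k
      rw [Finset.prod_congr rfl (fun j _ => show
          (if j = k then ((β j : ℂ) + 1) ^ 2 else ((β j : ℂ) + 1)) * ν j ^ β j
            = (if j = k then ((β j : ℂ) + 1) else 1) * ((((β j : ℂ) + 1)) * ν j ^ β j) by
        by_cases hj : j = k <;> simp [hj] <;> ring), Finset.prod_mul_distrib,
        Fintype.prod_ite_eq' k]
    simp only [hprod]
    have hsum : ∑ k : Fin n, ((β k : ℂ) + 1) = (∑ j, (β j : ℂ)) + n := by
      rw [Finset.sum_add_distrib]
      simp [Finset.card_univ]
    have hS : ∑ k : Fin n, (2 / (r : ℂ)) * (((β k : ℂ) + 1) *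
        ∏ j, (((β j : ℂ) + 1) * ν j ^ β j))
          = (2 / (r : ℂ)) * (((∑ j, (β j : ℂ)) + n) * ∏ j, (((β j : ℂ) + 1) * ν j ^ β j)) := by
      rw [← Finset.mul_sum, ← Finset.sum_mul, hsum]
    rw [hS]
    field_simp [hrC]
    ring
  · congr 1
    refine Finset.sum_congr rfl fun k _ => ?_
    have hprod : (∏ j, if j = k then 2 * ((1 - ν j) ^ 3)⁻¹ - ((1 - ν j) ^ 2)⁻¹
        else ((1 - ν j) ^ 2)⁻¹)
          = ((2 * ((1 - ν k) ^ 3)⁻¹ - ((1 - ν k) ^ 2)⁻¹) * (1 - ν k) ^ 2) * Q⁻¹ := by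
      rw [hQdef, Finset.prod_congr rfl (fun j _ => show
          (if j = k then 2 * ((1 - ν j) ^ 3)⁻¹ - ((1 - ν j) ^ 2)⁻¹ else ((1 - ν j) ^ 2)⁻¹)
            = (if j = k then (2 * ((1 - ν j) ^ 3)⁻¹ - ((1 - ν j) ^ 2)⁻¹) * (1 - ν j) ^ 2
                else 1) * ((1 - ν j) ^ 2)⁻¹ by
        by_cases hj : j = k
        · rw [if_pos hj, if_pos hj, mul_assoc,
            mul_inv_cancel₀ (pow_ne_zero 2 (hν1 j)), mul_one]
        · rw [if_neg hj, if_neg hj, one_mul]), Finset.prod_mul_distrib,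
        Fintype.prod_ite_eq' k, ← Finset.prod_inv_distrib]
    rw [hprod]
    field_simp [hrC, hQ, hν1 k]
    ring
end

section
/- For every natural number n, the polynomial (3 + n x)/(6 (1−x)^{4+n}) in the variable x vanishes at x = −3/n (for n ≥ 1), and in particular there exist w, ξ in the open unit disk of ℂ with (3 + n·w·conj(ξ)) = 0, namely w = i√(3/n), ξ = −i√(3/n), whenever n ≥ 4. -/
theorem kernel_zero_Dn (n : ℕ) (hn : 4 ≤ n) :
    ((3 + (n : ℂ) * (-3 / n)) / (6 * (1 - (-3 / n : ℂ)) ^ (4 + n)) = 0) ∧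
      ∃ w ξ : ℂ, ‖w‖ < 1 ∧ ‖ξ‖ < 1 ∧
        w = Complex.I * (Real.sqrt (3 / n) : ℂ) ∧
        ξ = -Complex.I * (Real.sqrt (3 / n) : ℂ) ∧
        3 + (n : ℂ) * (w * starRingEnd ℂ ξ) = 0 := by
  have hn0 : (n : ℂ) ≠ 0 := Nat.cast_ne_zero.mpr (by omega)
  have hnum : (3 + (n : ℂ) * (-3 / n)) = 0 := by field_simp; ring
  constructor
  · rw [hnum, zero_div]
  · set s : ℝ := Real.sqrt (3 / n)
    have hnR : (0 : ℝ) < n := by positivity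
    have hs2 : s ^ 2 = 3 / n := Real.sq_sqrt (by positivity)
    have hslt : s < 1 := by
      rw [show (1:ℝ) = Real.sqrt 1 by simp]
      apply Real.sqrt_lt_sqrt (by positivity)
      rw [div_lt_one hnR]
      exact_mod_cast by omega
    have hs0 : 0 ≤ s := Real.sqrt_nonneg _
    refine ⟨Complex.I * (s : ℂ), -Complex.I * (s : ℂ), ?_, ?_, rfl, rfl, ?_⟩
    · simpa [abs_of_nonneg hs0] using hslt
    · simpa [abs_of_nonneg hs0] using hslt
    · have : ((s : ℂ)) ^ 2 = (3 : ℂ) / n := by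
        have h := congrArg (Complex.ofReal) hs2
        push_cast at h
        exact h
      simp only [map_mul, Complex.conj_I, map_neg, Complex.conj_ofReal]
      ring_nf
      rw [show Complex.I ^ 2 = -1 from Complex.I_sq]
      rw [this]
      field_simp; ring
end
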